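/- Under the stated setup, suppose each scalar μ_{1i} (1 ≤ i ≤ d) is a real number, and suppose ι : M_d(ℂ) → M_d(ℂ) is a conjugate-linear map with ι(e_{A,i}) = e_{A,i} for all i and ι(e_{A,i}·e_{B,1}·e_{A,j}) = e_{A,j}·e_{B,1}·e_{A,i} for all i ≠ j. Then ι(e_{B,1}) = e_{B,1}. -/

import Mathlib

open Matrix Polynomial

/-- The eigenprojection `e_{M,i} = ∏_{j ≠ i} (M - λ_j·I)/(λ_i - λ_j)` of a matrix `M`
onto the `λ_i`-eigenspace. -/
noncomputable def eigProj {d : ℕ} (lam : Fin d → ℂ)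
    (M : Matrix (Fin d) (Fin d) ℂ) (i : Fin d) : Matrix (Fin d) (Fin d) ℂ :=
  (∏ j ∈ Finset.univ.erase i, (lam i - lam j)⁻¹) •
    Polynomial.aeval M (∏ j ∈ Finset.univ.erase i, (X - C (lam j)))

lemma aeval_diagonal {d : ℕ} (v : Fin d → ℂ) (p : ℂ[X]) :
    Polynomial.aeval (Matrix.diagonal v) p = Matrix.diagonal (fun k => p.eval (v k)) := by
  induction p using Polynomial.induction_on' with
  | add p q hp hq =>
      simp [hp, hq, Matrix.diagonal_add]
  | monomial n c =>
      simp only [aeval_monomial, Matrix.diagonal_pow, eval_monomial]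
      rw [Algebra.algebraMap_eq_smul_one, smul_mul_assoc, one_mul,
        ← Matrix.diagonal_smul]
      congr 1

/-- Conjugation by an invertible matrix as an algebra homomorphism. -/
noncomputable def conjHom {d : ℕ} (Q : Matrix (Fin d) (Fin d) ℂ) (hQ : IsUnit Q) :
    Matrix (Fin d) (Fin d) ℂ →ₐ[ℂ] Matrix (Fin d) (Fin d) ℂ where
  toFun X := Q * X * Q⁻¹
  map_one' := by
    show Q * 1 * Q⁻¹ = 1
    rw [mul_one, Matrix.mul_nonsing_inv _ ((Matrix.isUnit_iff_isUnit_det Q).mp hQ)]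
  map_mul' X Y := by
    have h : Q⁻¹ * Q = 1 := Matrix.nonsing_inv_mul _ ((Matrix.isUnit_iff_isUnit_det Q).mp hQ)
    calc Q * (X * Y) * Q⁻¹ = (Q * X) * (Q⁻¹ * Q) * (Y * Q⁻¹) := by rw [h]; noncomm_ring
      _ = Q * X * Q⁻¹ * (Q * Y * Q⁻¹) := by noncomm_ring
  map_zero' := by simp
  map_add' X Y := by noncomm_ring
  commutes' c := by
    have h : Q * Q⁻¹ = 1 := Matrix.mul_nonsing_inv _ ((Matrix.isUnit_iff_isUnit_det Q).mp hQ)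
    show Q * (algebraMap ℂ _ c) * Q⁻¹ = algebraMap ℂ _ c
    rw [Algebra.algebraMap_eq_smul_one, mul_smul_comm, mul_one, smul_mul_assoc, h]

@[simp] lemma conjHom_apply {d : ℕ} (Q : Matrix (Fin d) (Fin d) ℂ) (hQ : IsUnit Q)
    (X : Matrix (Fin d) (Fin d) ℂ) : conjHom Q hQ X = Q * X * Q⁻¹ := rfl

lemma eigProj_conj {d : ℕ} (lam : Fin d → ℂ) (hinj : Function.Injective lam)
    (Q : Matrix (Fin d) (Fin d) ℂ) (hQ : IsUnit Q) (i : Fin d) :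
    eigProj lam (Q * Matrix.diagonal lam * Q⁻¹) i
      = Q * Matrix.diagonal (fun k => if k = i then (1:ℂ) else 0) * Q⁻¹ := by
  have h1 : Q * Matrix.diagonal lam * Q⁻¹ = conjHom Q hQ (Matrix.diagonal lam) := rfl
  have hfun : ((∏ j ∈ Finset.univ.erase i, (lam i - lam j)⁻¹) •
      fun k => Polynomial.eval (lam k) (∏ j ∈ Finset.univ.erase i, (X - C (lam j))))
      = fun k => if k = i then (1:ℂ) else 0 := by
    funext k
    simp only [Pi.smul_apply, eval_prod, eval_sub, eval_X, eval_C, smul_eq_mul]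
    by_cases hk : k = i
    · subst hk
      rw [Finset.prod_inv_distrib, inv_mul_cancel₀, if_pos rfl]
      exact Finset.prod_ne_zero_iff.mpr fun j hj =>
        sub_ne_zero.mpr fun h => (Finset.mem_erase.mp hj).1 (hinj h).symm
    · have hz : (∏ j ∈ Finset.univ.erase i, (lam k - lam j)) = 0 :=
        Finset.prod_eq_zero (Finset.mem_erase.mpr ⟨hk, Finset.mem_univ k⟩) (sub_self _)
      rw [if_neg hk, hz, mul_zero]
  rw [eigProj, h1, Polynomial.aeval_algHom_apply, aeval_diagonal, conjHom_apply,
    ← Matrix.smul_mul, ← Matrix.mul_smul, ← Matrix.diagonal_smul, hfun]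

lemma indDiag_sandwich {d : ℕ} (i : Fin d) (X : Matrix (Fin d) (Fin d) ℂ) :
    Matrix.diagonal (fun k => if k = i then (1:ℂ) else 0) * X *
      Matrix.diagonal (fun k => if k = i then (1:ℂ) else 0)
    = X i i • Matrix.diagonal (fun k => if k = i then (1:ℂ) else 0) := by
  ext a b
  simp only [Matrix.mul_diagonal, Matrix.diagonal_mul, Matrix.smul_apply,
    Matrix.diagonal_apply, smul_eq_mul]
  rcases eq_or_ne a i with ha | ha <;> rcases eq_or_ne b i with hb | hb
  · subst ha; subst hb; simp
  · subst ha; simp [Ne.symm hb]; exact fun h => absurd h hb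
  · subst hb; simp [Ne.symm ha, ha]
  · simp [ha, hb]

lemma trace_indDiag_mul {d : ℕ} (i : Fin d) (M : Matrix (Fin d) (Fin d) ℂ) :
    Matrix.trace (Matrix.diagonal (fun k => if k = i then (1:ℂ) else 0) * M) = M i i := by
  simp only [Matrix.trace, Matrix.diag, Matrix.diagonal_mul, ite_mul, one_mul, zero_mul]
  rw [Finset.sum_ite_eq' Finset.univ i (fun k => M k k)]
  simp

lemma sum_indDiag {d : ℕ} :
    (∑ i : Fin d, Matrix.diagonal (fun k => if k = i then (1:ℂ) else 0)) = 1 := by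
  ext a b
  simp only [Matrix.sum_apply, Matrix.diagonal_apply, Matrix.one_apply]
  by_cases hab : a = b
  · subst hab
    simp [Finset.sum_ite_eq]
  · simp [hab]

lemma conj_sandwich {d : ℕ} (Q X : Matrix (Fin d) (Fin d) ℂ) (i : Fin d) :
    (Q * Matrix.diagonal (fun k => if k = i then (1:ℂ) else 0) * Q⁻¹) * X *
      (Q * Matrix.diagonal (fun k => if k = i then (1:ℂ) else 0) * Q⁻¹)
    = ((Q⁻¹ * X * Q) i i) •
      (Q * Matrix.diagonal (fun k => if k = i then (1:ℂ) else 0) * Q⁻¹) := by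
  set D := Matrix.diagonal (fun k => if k = i then (1:ℂ) else 0) with hD
  have h1 : (Q * D * Q⁻¹) * X * (Q * D * Q⁻¹) = Q * (D * (Q⁻¹ * X * Q) * D) * Q⁻¹ := by
    noncomm_ring
  rw [h1, indDiag_sandwich, Matrix.mul_smul, Matrix.smul_mul]

lemma trace_conj_mul {d : ℕ} (Q X : Matrix (Fin d) (Fin d) ℂ) (i : Fin d) :
    Matrix.trace ((Q * Matrix.diagonal (fun k => if k = i then (1:ℂ) else 0) * Q⁻¹) * X)
    = (Q⁻¹ * X * Q) i i := by
  set D := Matrix.diagonal (fun k => if k = i then (1:ℂ) else 0) with hD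
  have h1 : (Q * D * Q⁻¹) * X = Q * (D * (Q⁻¹ * X)) := by noncomm_ring
  rw [h1, Matrix.trace_mul_comm, ← trace_indDiag_mul i (Q⁻¹ * X * Q)]
  congr 1
  noncomm_ring

/-- if the scalars `μ_{1i}` are real and `ι` is a conjugate-linear map fixing
the `e_{A,i}` and swapping `e_{A,i}·e_{B,1}·e_{A,j}` with `e_{A,j}·e_{B,1}·e_{A,i}`,
then `ι(e_{B,1}) = e_{B,1}`. -/
theorem iota_fixes_eB1 {d : ℕ} (hd : 1 ≤ d)
    (A B : Matrix (Fin d) (Fin d) ℂ)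
    (hA : IsUnit A) (hB : IsUnit B)
    (hbraid : A * B * A = B * A * B)
    (lam : Fin d → ℂ) (hinj : Function.Injective lam)
    (P : Matrix (Fin d) (Fin d) ℂ) (hP : IsUnit P)
    (hdiag : A = P * Matrix.diagonal lam * P⁻¹)
    (μ : Fin d → Fin d → ℂ)
    (hμ : ∀ i j, eigProj lam B i * eigProj lam A j * eigProj lam B i
        = μ i j • eigProj lam B i)
    (hreal : ∀ i, ∃ r : ℝ, μ (⟨0, hd⟩ : Fin d) i = (r : ℂ))
    (ι : Matrix (Fin d) (Fin d) ℂ → Matrix (Fin d) (Fin d) ℂ)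
    (hadd : ∀ X Y, ι (X + Y) = ι X + ι Y)
    (hsmul : ∀ (c : ℂ) X, ι (c • X) = (starRingEnd ℂ c) • ι X)
    (hfix : ∀ i, ι (eigProj lam A i) = eigProj lam A i)
    (hswap : ∀ i j, i ≠ j →
      ι (eigProj lam A i * eigProj lam B ⟨0, hd⟩ * eigProj lam A j)
        = eigProj lam A j * eigProj lam B ⟨0, hd⟩ * eigProj lam A i) :
    ι (eigProj lam B ⟨0, hd⟩) = eigProj lam B ⟨0, hd⟩ := by
  set i0 : Fin d := ⟨0, hd⟩ with hi0
  have hdetP := (Matrix.isUnit_iff_isUnit_det P).mp hP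
  have hABu : IsUnit (A * B) := hA.mul hB
  have hABdet := (Matrix.isUnit_iff_isUnit_det (A * B)).mp hABu
  set Q : Matrix (Fin d) (Fin d) ℂ := A * B * P with hQdef
  have hQ : IsUnit Q := hABu.mul hP
  -- B is conjugate-diagonal via Q
  have hBdiag : B = Q * Matrix.diagonal lam * Q⁻¹ := by
    have h2 : A * B * A = B * (A * B) := by rw [hbraid, mul_assoc]
    have h1 : B = (A * B) * A * (A * B)⁻¹ := by
      rw [h2, mul_assoc, Matrix.mul_nonsing_inv _ hABdet, mul_one]
    calc B = (A * B) * (P * Matrix.diagonal lam * P⁻¹) * (A * B)⁻¹ := by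
          rw [← hdiag]; exact h1
      _ = Q * Matrix.diagonal lam * Q⁻¹ := by
          rw [hQdef, Matrix.mul_inv_rev (A * B) P]
          noncomm_ring
  have heA : ∀ i, eigProj lam A i
      = P * Matrix.diagonal (fun k => if k = i then (1:ℂ) else 0) * P⁻¹ := fun i => by
    rw [hdiag]; exact eigProj_conj lam hinj P hP i
  have hfB : eigProj lam B i0
      = Q * Matrix.diagonal (fun k => if k = i0 then (1:ℂ) else 0) * Q⁻¹ := by
    rw [hBdiag]; exact eigProj_conj lam hinj Q hQ i0
  set f := eigProj lam B i0 with hfdef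
  -- trace of f is 1
  have htrf : Matrix.trace f = 1 := by
    have h := trace_conj_mul Q (1 : Matrix (Fin d) (Fin d) ℂ) i0
    rw [mul_one, Matrix.mul_one, Matrix.nonsing_inv_mul _
      ((Matrix.isUnit_iff_isUnit_det Q).mp hQ), Matrix.one_apply_eq] at h
    rw [hfB]
    exact h
  -- the scalar (Q⁻¹ eA_i Q)_{00} equals μ_{1i}
  have hμval : ∀ i, (Q⁻¹ * eigProj lam A i * Q) i0 i0 = μ i0 i := by
    intro i
    have hs : ((Q⁻¹ * eigProj lam A i * Q) i0 i0) • f = μ i0 i • f := by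
      rw [← hμ i0 i, ← hfdef, hfB]
      exact (conj_sandwich Q (eigProj lam A i) i0).symm
    have h := congrArg Matrix.trace hs
    rw [Matrix.trace_smul, Matrix.trace_smul, htrf, smul_eq_mul, smul_eq_mul,
      mul_one, mul_one] at h
    exact h
  -- the diagonal-compression scalar of f along eA_i is also μ_{1i}
  have hν : ∀ i, (P⁻¹ * f * P) i i = μ i0 i := by
    intro i
    rw [← hμval i]
    have t1 : (P⁻¹ * f * P) i i = Matrix.trace (eigProj lam A i * f) := by
      rw [heA i]
      exact (trace_conj_mul P f i).symm
    have t2 : (Q⁻¹ * eigProj lam A i * Q) i0 i0 = Matrix.trace (f * eigProj lam A i) := by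
      rw [hfB]
      exact (trace_conj_mul Q (eigProj lam A i) i0).symm
    rw [t1, t2, Matrix.trace_mul_comm]
  have hdiagterm : ∀ i, eigProj lam A i * f * eigProj lam A i
      = μ i0 i • eigProj lam A i := by
    intro i
    rw [← hν i, heA i]
    exact conj_sandwich P f i
  have hconjμ : ∀ i, (starRingEnd ℂ) (μ i0 i) = μ i0 i := by
    intro i
    obtain ⟨r, hr⟩ := hreal i
    rw [hr, Complex.conj_ofReal]
  have hsumA : (∑ i, eigProj lam A i) = 1 := by
    simp_rw [heA]
    rw [← Finset.sum_mul, ← Finset.mul_sum, sum_indDiag, mul_one,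
      Matrix.mul_nonsing_inv _ hdetP]
  have hf_sum : f = ∑ i, ∑ j, eigProj lam A i * f * eigProj lam A j := by
    conv_lhs => rw [← one_mul f, ← mul_one (1 * f), ← hsumA]
    simp_rw [Finset.sum_mul, Finset.mul_sum]
  have hιf : ι f = ∑ i, ∑ j, ι (eigProj lam A i * f * eigProj lam A j) := by
    have h1 : ι f = (AddMonoidHom.mk' ι hadd) f := rfl
    rw [h1]
    conv_lhs => rw [hf_sum]
    simp only [map_sum]
    rfl
  have hterm : ∀ i j, ι (eigProj lam A i * f * eigProj lam A j)
      = eigProj lam A j * f * eigProj lam A i := by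
    intro i j
    by_cases hij : i = j
    · subst hij
      rw [hdiagterm i, hsmul, hconjμ, hfix, ← hdiagterm i]
    · exact hswap i j hij
  calc ι f = ∑ i, ∑ j, ι (eigProj lam A i * f * eigProj lam A j) := hιf
    _ = ∑ i, ∑ j, eigProj lam A j * f * eigProj lam A i :=
        Finset.sum_congr rfl fun i _ => Finset.sum_congr rfl fun j _ => hterm i j
    _ = ∑ j, ∑ i, eigProj lam A j * f * eigProj lam A i := Finset.sum_comm
    _ = f := hf_sum.symm
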